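/- Let k be a field, let L_1,...,L_s be s pairwise distinct lines in P^3, let I = I(L_1) ∩ ... ∩ I(L_s) ⊂ k[x_0,x_1,x_2,x_3], and set I^(m) = I(L_1)^m ∩ ... ∩ I(L_s)^m. Then for all integers t ≥ m ≥ 1, dim_k (I^(m))_t ≥ C(t+3,3) − s·[(t+2) − (2m+1)/3]·C(m+1,2). -/

import Mathlib

open MvPolynomial Filter

/-- A homogeneous ideal of the polynomial ring: an ideal closed under taking
homogeneous components. -/
def IsHomogIdeal {k : Type*} [CommSemiring k] {σ : Type*} (I : Ideal (MvPolynomial σ k)) : Prop :=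
  ∀ f ∈ I, ∀ d : ℕ, MvPolynomial.homogeneousComponent d f ∈ I

/-- `α(I)`: the least degree of a nonzero element of `I`. -/
noncomputable def alphaDeg {k : Type*} [CommSemiring k] {σ : Type*}
    (I : Ideal (MvPolynomial σ k)) : ℕ :=
  sInf {d | ∃ f ∈ I, f ≠ 0 ∧ f.totalDegree = d}

/-- The `m`-th symbolic power of `I`: the intersection, over the associated primes `P`
of `I` (i.e. of `R ⧸ I`), of the contractions `I^m R_P ∩ R`. -/
noncomputable def symbolicPower {R : Type*} [CommRing R] (I : Ideal R) (m : ℕ) : Ideal R :=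
  ⨅ P : {P : Ideal R // P ∈ associatedPrimes R (R ⧸ I)},
    letI : P.1.IsPrime := IsAssociatedPrime.isPrime P.2
    (Ideal.map (algebraMap R (Localization.AtPrime P.1)) (I ^ m)).comap
      (algebraMap R (Localization.AtPrime P.1))

/-- The resurgence `ρ(I) = sup {m/r : sp m ⊄ I^r}`, stated relative to a given
symbolic power function `sp`. -/
noncomputable def resurgence {R : Type*} [CommRing R] (I : Ideal R) (sp : ℕ → Ideal R) : ℝ :=
  sSup {x : ℝ | ∃ m r : ℕ, 0 < m ∧ 0 < r ∧ ¬ sp m ≤ I ^ r ∧ x = (m : ℝ) / r}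

/-- The asymptotic resurgence `ρ_a(I) = sup {m/r : sp (mt) ⊄ I^{rt} for all t ≫ 0}`. -/
noncomputable def asymResurgence {R : Type*} [CommRing R] (I : Ideal R) (sp : ℕ → Ideal R) : ℝ :=
  sSup {x : ℝ | ∃ m r : ℕ, 0 < m ∧ 0 < r ∧
    (∀ᶠ t : ℕ in atTop, ¬ sp (m * t) ≤ I ^ (r * t)) ∧ x = (m : ℝ) / r}

/-- `ρ(I,t) = sup {m/r : sp m ⊄ I^r, m ≥ t, r ≥ t}`. -/
noncomputable def resurgenceFrom {R : Type*} [CommRing R] (I : Ideal R) (sp : ℕ → Ideal R)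
    (t : ℕ) : ℝ :=
  sSup {x : ℝ | ∃ m r : ℕ, 0 < m ∧ 0 < r ∧ t ≤ m ∧ t ≤ r ∧ ¬ sp m ≤ I ^ r ∧ x = (m : ℝ) / r}

/-- `ρ'_a(I) = limsup_{t → ∞} ρ(I,t)`. -/
noncomputable def asymResurgence' {R : Type*} [CommRing R] (I : Ideal R) (sp : ℕ → Ideal R) : ℝ :=
  Filter.limsup (resurgenceFrom I sp) Filter.atTop

/-- The symbolic powers of the radical ideal of a union of disjoint lines (given as
2-dimensional linear subspaces, i.e. affine cones of lines in projective space):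
`I^(m) = I(L_1)^m ∩ … ∩ I(L_s)^m`. -/
noncomputable def linesSymbolicPower {k : Type*} [Field k] {n s : ℕ}
    (W : Fin s → Submodule k (Fin n → k)) (m : ℕ) : Ideal (MvPolynomial (Fin n) k) :=
  ⨅ i, (MvPolynomial.vanishingIdeal k ((W i : Set (Fin n → k)))) ^ m

/-- The dimension of the degree-`j` homogeneous component of an ideal of the
polynomial ring. -/
noncomputable def hilbDim {k : Type*} [Field k] {n : ℕ}
    (I : Ideal (MvPolynomial (Fin n) k)) (j : ℕ) : ℕ :=
  Module.finrank k
    ↥(Submodule.restrictScalars k I ⊓ MvPolynomial.homogeneousSubmodule (Fin n) k j)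


namespace St17Aux

open MvPolynomial Module Matrix Finset

/-! ### Arithmetic lemmas -/

lemma sum_q (a : ℚ) (n : ℕ) :
    ∑ j ∈ Finset.range n, ((j : ℚ) + 1) * (a - (j : ℚ))
      = a * n * (n + 1) / 2 - ((n : ℚ) - 1) * n * (n + 1) / 3 := by
  induction n with
  | zero => simp
  | succ n ih => rw [Finset.sum_range_succ, ih]; push_cast; ring

lemma cast_choose_two (m : ℕ) : (((m + 1).choose 2 : ℕ) : ℚ) = m * (m + 1) / 2 := by
  induction m with
  | zero => simp
  | succ n ih =>
    rw [show n + 1 + 1 = (n + 1) + 1 from rfl, Nat.choose_succ_succ (n + 1) 1]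
    push_cast [ih]
    simp [Nat.choose_one_right]
    ring

lemma cast_choose_three (t : ℕ) :
    (((t + 3).choose 3 : ℕ) : ℚ) = (t + 1) * (t + 2) * (t + 3) / 6 := by
  induction t with
  | zero => norm_num
  | succ n ih =>
    rw [show n + 1 + 3 = (n + 3) + 1 from rfl, Nat.choose_succ_succ (n + 3) 2]
    push_cast [ih, show n + 3 = (n + 2) + 1 from rfl, cast_choose_two]
    ring

/-! ### The index set -/

def Dset (m t : ℕ) : Finset ((_ : ℕ) × ℕ × ℕ) :=
  (Finset.Icc m t).sigma fun j => Finset.range (j + 1) ×ˢ Finset.range (t + 1 - j)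

lemma card_Dset (m t : ℕ) :
    (Dset m t).card = ∑ j ∈ Finset.Icc m t, (j + 1) * (t + 1 - j) := by
  simp [Dset, Finset.card_sigma]

lemma card_Dset_cast (m t : ℕ) (h : m ≤ t + 1) :
    ((Dset m t).card : ℚ)
      = ∑ j ∈ Finset.range (t + 1), ((j : ℚ) + 1) * ((t : ℚ) + 1 - (j : ℚ))
        - ∑ j ∈ Finset.range m, ((j : ℚ) + 1) * ((t : ℚ) + 1 - (j : ℚ)) := by
  have key : ∀ n, n ≤ t + 1 → ∑ j ∈ Finset.range n, (((j + 1) * (t + 1 - j) : ℕ) : ℚ)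
      = ∑ j ∈ Finset.range n, ((j : ℚ) + 1) * ((t : ℚ) + 1 - (j : ℚ)) := by
    intro n hn
    refine Finset.sum_congr rfl fun j hj => ?_
    rw [Finset.mem_range] at hj
    push_cast [Nat.cast_sub (by omega : j ≤ t + 1)]
    ring
  rw [card_Dset, ← Finset.Ico_add_one_right_eq_Icc, Nat.cast_sum,
    Finset.sum_Ico_eq_sub (fun j => (((j + 1) * (t + 1 - j) : ℕ) : ℚ)) h,
    key (t + 1) le_rfl, key m h]

noncomputable def Efun (t : ℕ) (x : (_ : ℕ) × ℕ × ℕ) : Fin 4 →₀ ℕ :=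
  Finsupp.equivFunOnFinite.symm ![x.2.1, x.1 - x.2.1, x.2.2, t - x.1 - x.2.2]

lemma Efun_apply (t : ℕ) (x : (_ : ℕ) × ℕ × ℕ) (i : Fin 4) :
    Efun t x i = ![x.2.1, x.1 - x.2.1, x.2.2, t - x.1 - x.2.2] i := rfl

lemma mem_Dset {m t : ℕ} {x : (_ : ℕ) × ℕ × ℕ} (hx : x ∈ Dset m t) :
    m ≤ x.1 ∧ x.1 ≤ t ∧ x.2.1 ≤ x.1 ∧ x.2.2 ≤ t - x.1 := by
  obtain ⟨j, a, c⟩ := x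
  simp only [Dset, Finset.mem_sigma, Finset.mem_Icc, Finset.mem_product,
    Finset.mem_range] at hx
  dsimp only
  omega

lemma Efun_degree {m t : ℕ} {x : (_ : ℕ) × ℕ × ℕ} (hx : x ∈ Dset m t) :
    (Efun t x).degree = t := by
  obtain ⟨hm, ht, ha, hc⟩ := mem_Dset hx
  have : (Efun t x).degree = ∑ i : Fin 4, Efun t x i := by
    rw [Finsupp.degree]
    exact Finset.sum_subset (Finset.subset_univ _) (by
      intro i _ hi
      simpa [Finsupp.mem_support_iff] using hi)
  rw [this, Fin.sum_univ_four]
  simp only [Efun_apply]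
  simp only [Matrix.cons_val_zero, Matrix.cons_val_one, Matrix.head_cons,
    Matrix.cons_val_two, Matrix.tail_cons, Matrix.cons_val_three]
  omega

lemma Efun_firsttwo {m t : ℕ} {x : (_ : ℕ) × ℕ × ℕ} (hx : x ∈ Dset m t) :
    Efun t x 0 + Efun t x 1 = x.1 := by
  obtain ⟨hm, ht, ha, hc⟩ := mem_Dset hx
  simp only [Efun_apply]
  simp only [Matrix.cons_val_zero, Matrix.cons_val_one, Matrix.head_cons]
  omega

lemma Efun_injOn (t : ℕ) (m : ℕ) : Set.InjOn (Efun t) (Dset m t) := by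
  intro x hx y hy h
  obtain ⟨_, _, hax, _⟩ := mem_Dset hx
  obtain ⟨_, _, hay, _⟩ := mem_Dset hy
  have h0 := congrArg (fun f => f 0) h
  have h1 := congrArg (fun f => f 1) h
  have h2 := congrArg (fun f => f 2) h
  simp only [Efun_apply, Finsupp.coe_mk] at h0 h1 h2
  simp only [Matrix.cons_val_zero, Matrix.cons_val_one, Matrix.head_cons,
    Matrix.cons_val_two, Matrix.tail_cons] at h0 h1 h2
  obtain ⟨j, a, c⟩ := x
  obtain ⟨j', a', c'⟩ := y
  simp_all
  omega

lemma Efun_surj {t : ℕ} (d : Fin 4 →₀ ℕ) (hd : d.degree = t) :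
    ∃ x ∈ Dset 0 t, Efun t x = d := by
  have hsum : d 0 + d 1 + d 2 + d 3 = t := by
    rw [← hd, Finsupp.degree_apply]
    rw [show (∑ i ∈ d.support, d i) = ∑ i : Fin 4, d i from
      Finset.sum_subset (Finset.subset_univ _) (by
        intro i _ hi
        simpa [Finsupp.mem_support_iff] using hi)]
    rw [Fin.sum_univ_four]
  refine ⟨⟨d 0 + d 1, d 0, d 2⟩, ?_, ?_⟩
  · simp only [Dset, Finset.mem_sigma, Finset.mem_Icc, Finset.mem_product, Finset.mem_range]
    omega
  · ext i
    rw [Efun_apply]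
    set_option linter.unnecessarySeqFocus false in
    fin_cases i <;> simp <;> omega

/-! ### Linear substitutions -/

variable {k : Type*} [Field k]

noncomputable def linP (M : Matrix (Fin 4) (Fin 4) k) : Fin 4 → MvPolynomial (Fin 4) k :=
  fun i => ∑ j, C (M i j) * X j

lemma linP_isHomog (M : Matrix (Fin 4) (Fin 4) k) (i : Fin 4) :
    (linP M i).IsHomogeneous 1 :=
  IsHomogeneous.sum _ _ _ fun j _ => isHomogeneous_C_mul_X _ _

lemma aeval_linP_linP (M N : Matrix (Fin 4) (Fin 4) k) (i : Fin 4) :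
    aeval (linP M) (linP N i) = linP (N * M) i := by
  simp only [linP, map_sum, _root_.map_mul, aeval_C, aeval_X, Matrix.mul_apply, algebraMap_eq,
    Finset.mul_sum, Finset.sum_mul, mul_assoc, C_mul]
  rw [Finset.sum_comm]

lemma linP_one : linP (1 : Matrix (Fin 4) (Fin 4) k) = X := by
  funext i
  simp [linP, Matrix.one_apply, apply_ite C, ite_mul]

lemma aeval_linP_injective (M : Matrix (Fin 4) (Fin 4) k) [Invertible M] :
    Function.Injective (aeval (R := k) (linP M)) := by
  have hcomp : (aeval (linP (⅟M))).comp (aeval (linP M))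
      = (aeval (R := k) (linP (1 : Matrix (Fin 4) (Fin 4) k)) :
          MvPolynomial (Fin 4) k →ₐ[k] _) :=
    MvPolynomial.algHom_ext fun i => by
      simp only [AlgHom.coe_comp, Function.comp_apply, aeval_X]
      rw [aeval_linP_linP, mul_invOf_self]
  intro x y hxy
  have h2 := congrArg (aeval (R := k) (linP (⅟M))) hxy
  have h3 : ∀ z : MvPolynomial (Fin 4) k, aeval (linP (⅟M)) (aeval (linP M) z) = z := by
    intro z
    have := congrFun (congrArg DFunLike.coe hcomp) z
    simpa [linP_one, aeval_X_left_apply] using this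
  rwa [h3, h3] at h2

/-! ### A good matrix for a 2-dimensional subspace -/

lemma exists_goodMatrix (W : Submodule k (Fin 4 → k)) (h2 : finrank k W = 2) :
    ∃ M : Matrix (Fin 4) (Fin 4) k, IsUnit M ∧
      (∀ x ∈ W, ∑ j, M 0 j * x j = 0) ∧ (∀ x ∈ W, ∑ j, M 1 j * x j = 0) := by
  classical
  have hV : finrank k (Fin 4 → k) = 4 := by simp
  have hN : finrank k W.dualAnnihilator = 2 := by
    have e1 := LinearEquiv.finrank_eq (R := k) (M := (Fin 4 → k) ⧸ W)
      (N := ↥W.dualAnnihilator) (Subspace.quotEquivAnnihilator W)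
    have e2 := Submodule.finrank_quotient_add_finrank W
    omega
  obtain ⟨N', hc⟩ := Submodule.exists_isCompl W.dualAnnihilator
  have hN' : finrank k N' = 2 := by
    have e1 := Submodule.finrank_add_eq_of_isCompl hc
    rw [Subspace.dual_finrank_eq, hV, hN] at e1
    omega
  haveI := Module.Free.of_divisionRing (K := k) (V := ↥W.dualAnnihilator)
  haveI := Module.Free.of_divisionRing (K := k) (V := ↥N')
  let e4 : Fin 2 ⊕ Fin 2 ≃ Fin 4 := finSumFinEquiv
  let bN := finBasisOfFinrankEq k W.dualAnnihilator hN
  let bN' := finBasisOfFinrankEq k N' hN'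
  let g : Basis (Fin 4) k (Module.Dual k (Fin 4 → k)) :=
    ((bN.prod bN').map (Submodule.prodEquivOfIsCompl W.dualAnnihilator N' hc)).reindex e4
  have hg : ∀ i : Fin 2, g (e4 (Sum.inl i)) ∈ W.dualAnnihilator := by
    intro i
    rw [Basis.reindex_apply, Equiv.symm_apply_apply, Basis.map_apply]
    rw [Submodule.coe_prodEquivOfIsCompl']
    rw [Basis.prod_apply_inl_fst, Basis.prod_apply_inl_snd]
    simpa using (bN i).2
  set M : Matrix (Fin 4) (Fin 4) k := fun i j => g i (Pi.single j 1) with hMdef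
  have hMinv : IsUnit M := by
    have hMeq : M = ((Pi.basisFun k (Fin 4)).dualBasis.toMatrix ⇑g)ᵀ := by
      ext i j
      rw [Matrix.transpose_apply, Basis.toMatrix_apply, Basis.dualBasis_repr,
        Pi.basisFun_apply]
    rw [hMeq]
    letI := Basis.invertibleToMatrix (Pi.basisFun k (Fin 4)).dualBasis g
    letI := Matrix.invertibleTranspose ((Pi.basisFun k (Fin 4)).dualBasis.toMatrix ⇑g)
    exact isUnit_of_invertible _
  have hval : ∀ i : Fin 4, ∀ x : Fin 4 → k, ∑ j, M i j * x j = g i x := by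
    intro i x
    rw [LinearMap.pi_apply_eq_sum_univ (g i : (Fin 4 → k) →ₗ[k] k) x]
    refine Finset.sum_congr rfl fun j _ => ?_
    rw [mul_comm, smul_eq_mul]
    have hs : (fun j1 => if j = j1 then (1 : k) else 0) = Pi.single j 1 := by
      funext l
      simp [Pi.single_apply, eq_comm]
    rw [hs]
  have h01 : ∀ i : Fin 2, ∀ x ∈ W, ∑ j, M (e4 (Sum.inl i)) j * x j = 0 := by
    intro i x hx
    rw [hval]
    exact (Submodule.mem_dualAnnihilator _).mp (hg i) x hx
  have e0 : e4 (Sum.inl (0 : Fin 2)) = (0 : Fin 4) := rfl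
  have e1 : e4 (Sum.inl (1 : Fin 2)) = (1 : Fin 4) := rfl
  refine ⟨M, hMinv, ?_, ?_⟩
  · have := h01 0; rwa [e0] at this
  · have := h01 1; rwa [e1] at this

/-! ### Dimension counting -/

lemma card_le_finrank {K M ι : Type*} [Field K] [AddCommGroup M] [Module K M] [Fintype ι]
    (A : Submodule K M) [FiniteDimensional K A] (v : ι → M) (hv : LinearIndependent K v)
    (hmem : ∀ i, v i ∈ A) : Fintype.card ι ≤ finrank K A := by
  have hw : LinearIndependent K (fun i => (⟨v i, hmem i⟩ : A)) :=
    LinearIndependent.of_comp A.subtype (by convert hv; rfl)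
  exact hw.fintype_card_le_finrank

lemma mono_linearIndependent (t : ℕ) (m : ℕ) :
    LinearIndependent k
      (fun x : {x // x ∈ Dset m t} => (monomial (Efun t x.1) (1 : k))) := by
  have hmono : LinearIndependent k (fun e : Fin 4 →₀ ℕ => (monomial e (1 : k))) := by
    have := (basisMonomials (Fin 4) k).linearIndependent
    rwa [coe_basisMonomials] at this
  have hEinj : Function.Injective (fun x : {x // x ∈ Dset m t} => Efun t x.1) :=
    fun x y h => Subtype.ext (Efun_injOn t m x.2 y.2 h)
  exact hmono.comp _ hEinj

lemma homog_le_span (t : ℕ) :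
    homogeneousSubmodule (Fin 4) k t ≤
      Submodule.span k ((fun x => (monomial (Efun t x) (1 : k))) '' (Dset 0 t)) := by
  intro f hf
  rw [mem_homogeneousSubmodule] at hf
  have hrepr : f = ∑ v ∈ f.support, (coeff v f) • (monomial v (1 : k)) := by
    conv_lhs => rw [f.as_sum]
    refine Finset.sum_congr rfl fun v _ => ?_
    rw [smul_monomial, smul_eq_mul, mul_one]
  rw [hrepr]
  refine Submodule.sum_mem _ fun v hv => Submodule.smul_mem _ _ (Submodule.subset_span ?_)
  have hdeg : v.degree = t := by
    rw [Finsupp.degree_eq_weight_one]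
    exact hf (mem_support_iff.mp hv)
  obtain ⟨x, hx, rfl⟩ := Efun_surj v hdeg
  exact Set.mem_image_of_mem _ hx

lemma finrank_homog_eq (t : ℕ) :
    FiniteDimensional k (homogeneousSubmodule (Fin 4) k t) ∧
      finrank k (homogeneousSubmodule (Fin 4) k t) = (Dset 0 t).card := by
  classical
  set T : Finset (MvPolynomial (Fin 4) k) :=
    (Dset 0 t).image (fun x => monomial (Efun t x) (1 : k)) with hT
  have hspan : homogeneousSubmodule (Fin 4) k t ≤ Submodule.span k (T : Set _) := by
    rw [hT, Finset.coe_image]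
    exact homog_le_span t
  haveI hfd : FiniteDimensional k (homogeneousSubmodule (Fin 4) k t) :=
    Submodule.finiteDimensional_of_le hspan
  refine ⟨hfd, le_antisymm ?_ ?_⟩
  · have h1 : finrank k (homogeneousSubmodule (Fin 4) k t)
        ≤ finrank k (Submodule.span k (T : Set (MvPolynomial (Fin 4) k))) :=
      Submodule.finrank_mono hspan
    have h2 : finrank k (Submodule.span k (T : Set (MvPolynomial (Fin 4) k))) ≤ T.card := by
      simpa [Set.finrank] using finrank_span_finset_le_card T
    have h3 : T.card ≤ (Dset 0 t).card := Finset.card_image_le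
    omega
  · rw [← Fintype.card_coe (Dset 0 t)]
    refine card_le_finrank _ (fun x : {x // x ∈ Dset 0 t} => monomial (Efun t x.1) (1 : k))
      (mono_linearIndependent t 0) fun x => ?_
    rw [mem_homogeneousSubmodule]
    exact isHomogeneous_monomial _ (Efun_degree x.2)

set_option maxHeartbeats 1000000 in
lemma finrank_ge_of_linforms (P : Ideal (MvPolynomial (Fin 4) k))
    (ℓ : Fin 4 → MvPolynomial (Fin 4) k) (hhom : ∀ i, (ℓ i).IsHomogeneous 1)
    (hinj : Function.Injective (aeval (R := k) ℓ))
    (h0 : ℓ 0 ∈ P) (h1 : ℓ 1 ∈ P) (m t : ℕ) (hmt : m ≤ t) :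
    (Dset m t).card ≤ finrank k ↥(Submodule.restrictScalars k (P ^ m) ⊓
      homogeneousSubmodule (Fin 4) k t) := by
  classical
  haveI hfd : FiniteDimensional k (homogeneousSubmodule (Fin 4) k t) := (finrank_homog_eq t).1
  haveI : FiniteDimensional k ↥(Submodule.restrictScalars k (P ^ m) ⊓
      homogeneousSubmodule (Fin 4) k t) :=
    Submodule.finiteDimensional_of_le inf_le_right
  have hker : LinearMap.ker (aeval (R := k) ℓ).toLinearMap = ⊥ := by
    rw [LinearMap.ker_eq_bot]
    exact hinj
  have hli0 := (mono_linearIndependent t m (k := k)).map' _ hker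
  set v : {x // x ∈ Dset m t} → MvPolynomial (Fin 4) k :=
    (aeval (R := k) ℓ).toLinearMap ∘ fun x => monomial (Efun t x.1) (1 : k) with hv
  have hmem : ∀ x : {x // x ∈ Dset m t}, v x ∈ Submodule.restrictScalars k (P ^ m) ⊓
      homogeneousSubmodule (Fin 4) k t := by
    intro x
    have hprod : v x = ∏ i : Fin 4, ℓ i ^ (Efun t x.1 i) := by
      rw [hv]
      simp only [Function.comp_apply, AlgHom.toLinearMap_apply]
      rw [aeval_monomial, (algebraMap k (MvPolynomial (Fin 4) k)).map_one, one_mul]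
      exact Finsupp.prod_fintype _ _ fun i => pow_zero _
    constructor
    · rw [SetLike.mem_coe, Submodule.restrictScalars_mem, hprod, Fin.prod_univ_four]
      have h2 : ℓ 0 ^ (Efun t x.1 0) * ℓ 1 ^ (Efun t x.1 1)
          ∈ P ^ (Efun t x.1 0 + Efun t x.1 1) := by
        rw [pow_add]
        exact Ideal.mul_mem_mul (Ideal.pow_mem_pow h0 _) (Ideal.pow_mem_pow h1 _)
      have h3 : ℓ 0 ^ (Efun t x.1 0) * ℓ 1 ^ (Efun t x.1 1) ∈ P ^ m := by
        refine Ideal.pow_le_pow_right ?_ h2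
        rw [Efun_firsttwo x.2]
        exact (mem_Dset x.2).1
      exact Ideal.mul_mem_right _ _ (Ideal.mul_mem_right _ _ h3)
    · rw [SetLike.mem_coe, mem_homogeneousSubmodule]
      have hmono : IsHomogeneous (monomial (Efun t x.1) (1 : k)) t :=
        isHomogeneous_monomial _ (Efun_degree x.2)
      have h4 := hmono.aeval ℓ hhom
      rw [hv]
      simp only [Function.comp_apply, AlgHom.toLinearMap_apply]
      simpa using h4
  have hfin := card_le_finrank (Submodule.restrictScalars k (P ^ m) ⊓
      homogeneousSubmodule (Fin 4) k t) v hli0 hmem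
  rwa [Fintype.card_coe] at hfin

lemma finrank_inf_finset {K M ι : Type*} [Field K] [AddCommGroup M] [Module K M]
    (V : Submodule K M) [FiniteDimensional K V] (C : ι → Submodule K M) (F : Finset ι) :
    (finrank K V : ℚ) - ∑ i ∈ F, ((finrank K V : ℚ) - finrank K ↥(V ⊓ C i))
      ≤ finrank K ↥(V ⊓ F.inf C) := by
  classical
  induction F using Finset.cons_induction with
  | empty => rw [Finset.inf_empty, inf_top_eq]; simp
  | cons a F ha ih =>
    rw [Finset.inf_cons, Finset.sum_cons]
    have hXfd : FiniteDimensional K ↥(V ⊓ C a) := Submodule.finiteDimensional_of_le inf_le_left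
    have hYfd : FiniteDimensional K ↥(V ⊓ F.inf C) :=
      Submodule.finiteDimensional_of_le inf_le_left
    have heq : V ⊓ (C a ⊓ F.inf C) = (V ⊓ C a) ⊓ (V ⊓ F.inf C) := inf_inf_distrib_left _ _ _
    have hkey := Submodule.finrank_sup_add_finrank_inf_eq (V ⊓ C a) (V ⊓ F.inf C)
    have hsup : finrank K ↥((V ⊓ C a) ⊔ (V ⊓ F.inf C)) ≤ finrank K V :=
      Submodule.finrank_mono (sup_le inf_le_left inf_le_left)
    have hq : (finrank K ↥(V ⊓ C a) : ℚ) + finrank K ↥(V ⊓ F.inf C)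
        ≤ (finrank K V : ℚ) + finrank K ↥(V ⊓ (C a ⊓ F.inf C)) := by
      rw [heq]
      have := congrArg (fun n : ℕ => (n : ℚ)) hkey
      push_cast at this
      have hsupq : (finrank K ↥((V ⊓ C a) ⊔ (V ⊓ F.inf C)) : ℚ) ≤ finrank K V := by
        exact_mod_cast hsup
      linarith
    linarith

end St17Aux

set_option maxHeartbeats 400000 in

/-- For the ideal `I` of a union of `s` distinct lines in `P^3` and all `t ≥ m ≥ 1`,
`dim (I^(m))_t ≥ C(t+3,3) − s((t+2) − (2m+1)/3) C(m+1,2)`. -/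
theorem statement17 {k : Type*} [Field k] {s : ℕ}
    (W : Fin s → Submodule k (Fin 4 → k))
    (hdim : ∀ i, Module.finrank k ↥(W i) = 2)
    (hdistinct : ∀ i j, i ≠ j → W i ≠ W j)
    (I : Ideal (MvPolynomial (Fin 4) k))
    (hI : I = ⨅ i, MvPolynomial.vanishingIdeal k ((W i : Set (Fin 4 → k)))) :
    ∀ m t : ℕ, 1 ≤ m → m ≤ t →
      (((t + 3).choose 3 : ℚ) -
          (s : ℚ) * (((t : ℚ) + 2) - (2 * (m : ℚ) + 1) / 3) * ((m + 1).choose 2 : ℚ))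
        ≤ (hilbDim (linesSymbolicPower W m) t : ℚ) := by
  classical
  intro m t hm hmt
  set V := homogeneousSubmodule (Fin 4) k t with hV
  haveI hfd : FiniteDimensional k V := (St17Aux.finrank_homog_eq t).1
  set P : Fin s → Ideal (MvPolynomial (Fin 4) k) :=
    fun i => MvPolynomial.vanishingIdeal k ((W i : Set (Fin 4 → k))) with hP
  set Cc : Fin s → Submodule k (MvPolynomial (Fin 4) k) :=
    fun i => Submodule.restrictScalars k (P i ^ m) with hCc
  have hrs : Submodule.restrictScalars k (linesSymbolicPower W m) ⊓ V
      = V ⊓ Finset.univ.inf Cc := by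
    ext f
    simp only [Submodule.mem_inf, Submodule.restrictScalars_mem, linesSymbolicPower,
      Submodule.mem_iInf, Submodule.mem_finsetInf, Finset.mem_univ, forall_true_left,
      true_implies, hCc, hP, and_comm]
  have hhd : (hilbDim (linesSymbolicPower W m) t : ℚ)
      = (Module.finrank k ↥(V ⊓ Finset.univ.inf Cc) : ℚ) := by
    rw [hilbDim, hrs]
  have hline : ∀ i : Fin s,
      (St17Aux.Dset m t).card ≤ Module.finrank k ↥(V ⊓ Cc i) := by
    intro i
    obtain ⟨M, hMunit, hv0, hv1⟩ := St17Aux.exists_goodMatrix (W i) (hdim i)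
    obtain ⟨hMinv⟩ := hMunit.nonempty_invertible
    haveI := hMinv
    have hmemP : ∀ r : Fin 4, (∀ x ∈ W i, ∑ j, M r j * x j = 0) →
        St17Aux.linP M r ∈ P i := by
      intro r hr
      rw [hP]
      rw [MvPolynomial.mem_vanishingIdeal_iff]
      intro x hx
      rw [show (aeval x) (St17Aux.linP M r) = ∑ j, M r j * x j by
        simp [St17Aux.linP, map_sum, eval_C, eval_X]]
      exact hr x hx
    have hb := St17Aux.finrank_ge_of_linforms (P i) (St17Aux.linP M)
      (St17Aux.linP_isHomog M) (St17Aux.aeval_linP_injective M)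
      (hmemP 0 hv0) (hmemP 1 hv1) m t hmt
    rwa [inf_comm] at hb
  have hmain := St17Aux.finrank_inf_finset V Cc Finset.univ
  have hFcard : Module.finrank k ↥V = (St17Aux.Dset 0 t).card :=
    (St17Aux.finrank_homog_eq t).2
  have hsum_le : ∑ i ∈ Finset.univ, ((Module.finrank k ↥V : ℚ)
        - Module.finrank k ↥(V ⊓ Cc i))
      ≤ (s : ℚ) * ((Module.finrank k ↥V : ℚ) - ((St17Aux.Dset m t).card : ℚ)) := by
    calc ∑ i ∈ Finset.univ, ((Module.finrank k ↥V : ℚ) - Module.finrank k ↥(V ⊓ Cc i))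
        ≤ ∑ _i ∈ (Finset.univ : Finset (Fin s)),
            ((Module.finrank k ↥V : ℚ) - ((St17Aux.Dset m t).card : ℚ)) := by
          refine Finset.sum_le_sum fun i _ => ?_
          have hcast : ((St17Aux.Dset m t).card : ℚ)
              ≤ (Module.finrank k ↥(V ⊓ Cc i) : ℚ) := by
            exact_mod_cast hline i
          linarith
      _ = (s : ℚ) * ((Module.finrank k ↥V : ℚ) - ((St17Aux.Dset m t).card : ℚ)) := by
          rw [Finset.sum_const, Finset.card_univ, Fintype.card_fin, nsmul_eq_mul]
  have hS1 : ((St17Aux.Dset 0 t).card : ℚ) = (((t + 3).choose 3 : ℕ) : ℚ) := by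
    rw [St17Aux.card_Dset_cast 0 t (by omega), St17Aux.sum_q ((t : ℚ) + 1) (t + 1),
      St17Aux.cast_choose_three]
    push_cast
    ring
  have hS2 : ((St17Aux.Dset 0 t).card : ℚ) - ((St17Aux.Dset m t).card : ℚ)
      = (((t : ℚ) + 2) - (2 * (m : ℚ) + 1) / 3) * (((m + 1).choose 2 : ℕ) : ℚ) := by
    rw [St17Aux.card_Dset_cast 0 t (by omega), St17Aux.card_Dset_cast m t (by omega),
      St17Aux.sum_q ((t : ℚ) + 1) m, St17Aux.cast_choose_two]
    push_cast
    ring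
  have hFq : (Module.finrank k ↥V : ℚ) = ((St17Aux.Dset 0 t).card : ℚ) := by
    exact_mod_cast hFcard
  have hfinal : (Module.finrank k ↥V : ℚ)
      - (s : ℚ) * ((Module.finrank k ↥V : ℚ) - ((St17Aux.Dset m t).card : ℚ))
      ≤ (hilbDim (linesSymbolicPower W m) t : ℚ) := by
    rw [hhd]
    linarith
  rw [hFq] at hfinal
  calc (((t + 3).choose 3 : ℕ) : ℚ)
        - (s : ℚ) * (((t : ℚ) + 2) - (2 * (m : ℚ) + 1) / 3) * (((m + 1).choose 2 : ℕ) : ℚ)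
      = ((St17Aux.Dset 0 t).card : ℚ)
        - (s : ℚ) * (((St17Aux.Dset 0 t).card : ℚ) - ((St17Aux.Dset m t).card : ℚ)) := by
        linear_combination (-1 : ℚ) * hS1 + (s : ℚ) * hS2
    _ ≤ (hilbDim (linesSymbolicPower W m) t : ℚ) := hfinal
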